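/- Let (γ, u, λ) ∈ ℝⁿ × ℝⁿ × ℝᵐ with λ > 0 componentwise, and let (Δγ, Δu, Δλ) solve the dual barrier Newton system: W(u + Δu) = W(γ + Δγ), Aᵀ(λ + Δλ) = W(u + Δu) + c, and A(γ + Δγ) + b = μ(λ⁻¹ − λ⁻²∘Δλ). Let v ∈ ℝᵐ and μ > 0 satisfy λ = √μ·eᵛ. Then λ + Δλ = λ∘(𝟏 + d(v,μ)), where d(v,μ) is the log-domain Newton direction. -/

import Mathlib

open Matrix

/-- Elementwise exponentiation `e^v` of a vector. -/
noncomputable def expV {m : ℕ} (v : Fin m → ℝ) : Fin m → ℝ := fun i => Real.exp (v i)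

/-- The log-domain Newton system: `(d, x)` satisfies
`√μ·Aᵀ(eᵛ + eᵛ∘d) = Wx + c` and `√μ·(e^{−v} − e^{−v}∘d) = Ax + b`. -/
noncomputable def IsNewton {m n : ℕ} (A : Matrix (Fin m) (Fin n) ℝ) (b : Fin m → ℝ)
    (c : Fin n → ℝ) (W : Matrix (Fin n) (Fin n) ℝ) (μ : ℝ) (v d : Fin m → ℝ)
    (x : Fin n → ℝ) : Prop :=
  Real.sqrt μ • (Aᵀ).mulVec (expV v + expV v * d) = W.mulVec x + c ∧
  Real.sqrt μ • (expV (-v) - expV (-v) * d) = A.mulVec x + b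

/-- `v` is a centered point for parameter `μ`, witnessed by `x`:
`√μ·Aᵀeᵛ = Wx + c` and `√μ·e^{−v} = Ax + b`. -/
noncomputable def IsCentered {m n : ℕ} (A : Matrix (Fin m) (Fin n) ℝ) (b : Fin m → ℝ)
    (c : Fin n → ℝ) (W : Matrix (Fin n) (Fin n) ℝ) (μ : ℝ) (v : Fin m → ℝ)
    (x : Fin n → ℝ) : Prop :=
  Real.sqrt μ • (Aᵀ).mulVec (expV v) = W.mulVec x + c ∧
  Real.sqrt μ • expV (-v) = A.mulVec x + b

/-- The divergence `h(u,v) := ⟨eᵘ, e^{−v}⟩ + ⟨e^{−u}, eᵛ⟩ − 2m`. -/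
noncomputable def diverg {m : ℕ} (u v : Fin m → ℝ) : ℝ :=
  (∑ i, Real.exp (u i) * Real.exp (-v i)) + (∑ i, Real.exp (-u i) * Real.exp (v i))
    - 2 * m

/-- The Euclidean norm of a vector in `ℝᵐ`. -/
noncomputable def enorm {m : ℕ} (d : Fin m → ℝ) : ℝ := Real.sqrt (∑ i, d i ^ 2)

/-- let `(γ, u, λ)` with `λ > 0` and let `(Δγ, Δu, Δλ)` solve the dual
barrier Newton system `W(u+Δu) = W(γ+Δγ)`, `Aᵀ(λ+Δλ) = W(u+Δu) + c`,
`A(γ+Δγ) + b = μ(λ⁻¹ − λ⁻²∘Δλ)`. If `λ = √μ·eᵛ` with `μ > 0`, then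
`λ + Δλ = λ∘(𝟏 + d(v,μ))`, where `d(v,μ)` is the log-domain Newton direction. -/
theorem stmt_19 {m n : ℕ} (A : Matrix (Fin m) (Fin n) ℝ) (b : Fin m → ℝ) (c : Fin n → ℝ)
    (W : Matrix (Fin n) (Fin n) ℝ) (hW : W.PosSemidef) (hAW : (Aᵀ * A + W).PosDef)
    (γ u : Fin n → ℝ) (lam : Fin m → ℝ) (hlam : ∀ i, 0 < lam i)
    (Δγ Δu : Fin n → ℝ) (Δlam : Fin m → ℝ) (μ : ℝ) (hμ : 0 < μ)
    (h1 : W.mulVec (u + Δu) = W.mulVec (γ + Δγ))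
    (h2 : (Aᵀ).mulVec (lam + Δlam) = W.mulVec (u + Δu) + c)
    (h3 : A.mulVec (γ + Δγ) + b = μ • (lam⁻¹ - lam⁻¹ * lam⁻¹ * Δlam))
    (v : Fin m → ℝ) (hv : lam = Real.sqrt μ • expV v) :
    ∀ d : Fin m → ℝ, ∀ x' : Fin n → ℝ, IsNewton A b c W μ v d x' →
      lam + Δlam = lam * (1 + d) := by
  obtain ⟨s, hs0, rfl⟩ : ∃ s, 0 < s ∧ s * s = μ :=
    ⟨Real.sqrt μ, Real.sqrt_pos.mpr hμ, Real.mul_self_sqrt hμ.le⟩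
  intro d x' hN
  obtain ⟨hNa, hNb⟩ := hN
  simp only [Real.sqrt_mul_self hs0.le] at hNa hNb hv
  set d' : Fin m → ℝ := lam⁻¹ * Δlam with hd'
  have hl : ∀ i, lam i = s * Real.exp (v i) := by
    intro i; rw [hv]; rfl
  have key1 : s • (expV v + expV v * d') = lam + Δlam := by
    funext i
    have hE : Real.exp (v i) ≠ 0 := (Real.exp_pos _).ne'
    simp only [Pi.smul_apply, smul_eq_mul, Pi.add_apply, Pi.mul_apply, Pi.inv_apply,
      hd', expV, hl i]
    field_simp
  have key2 : s • (expV (-v) - expV (-v) * d')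
      = (s * s) • (lam⁻¹ - lam⁻¹ * lam⁻¹ * Δlam) := by
    funext i
    have hE : Real.exp (v i) ≠ 0 := (Real.exp_pos _).ne'
    simp only [Pi.smul_apply, smul_eq_mul, Pi.sub_apply, Pi.mul_apply, Pi.inv_apply,
      hd', expV, hl i, Pi.neg_apply, Real.exp_neg]
    field_simp
  have cand1 : s • (Aᵀ).mulVec (expV v + expV v * d') = W.mulVec (γ + Δγ) + c := by
    rw [← Matrix.mulVec_smul, key1, h2, h1]
  have cand2 : s • (expV (-v) - expV (-v) * d') = A.mulVec (γ + Δγ) + b := by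
    rw [key2, ← h3]
  set e : Fin m → ℝ := d - d' with he
  set y : Fin n → ℝ := x' - (γ + Δγ) with hy
  have harg : (expV v + expV v * d) - (expV v + expV v * d') = expV v * e := by
    funext i; simp [expV, he, mul_sub]
  have harg2 : (expV (-v) - expV (-v) * d) - (expV (-v) - expV (-v) * d')
      = -(expV (-v) * e) := by
    funext i; simp [expV, he, mul_sub]
  have e1 : s • (Aᵀ).mulVec (expV v * e) = W.mulVec y := by
    rw [hy, Matrix.mulVec_sub, ← harg, Matrix.mulVec_sub, smul_sub, hNa, cand1]
    abel
  have e2 : A.mulVec y = -(s • (expV (-v) * e)) := by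
    rw [hy, Matrix.mulVec_sub]
    have h0 : A.mulVec x' - A.mulVec (γ + Δγ)
        = (A.mulVec x' + b) - (A.mulVec (γ + Δγ) + b) := by abel
    rw [h0, ← hNb, ← cand2, ← smul_sub, harg2, smul_neg]
  have hdotsum : (expV (-v) * e) ⬝ᵥ (expV v * e) = ∑ i, e i ^ 2 := by
    simp only [dotProduct, Pi.mul_apply, expV, Pi.neg_apply, Real.exp_neg]
    apply Finset.sum_congr rfl
    intro i _
    have hE : Real.exp (v i) ≠ 0 := (Real.exp_pos _).ne'
    field_simp
  have hdot : y ⬝ᵥ W.mulVec y = -(s * s * ∑ i, e i ^ 2) := by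
    rw [← e1, dotProduct_smul, Matrix.dotProduct_mulVec, Matrix.vecMul_transpose, e2]
    simp only [neg_dotProduct, smul_dotProduct, smul_eq_mul, hdotsum]
    ring
  have hnn : 0 ≤ y ⬝ᵥ W.mulVec y := by
    have := hW.dotProduct_mulVec_nonneg y
    simpa using this
  have hsum : (∑ i, e i ^ 2) = 0 := by
    have h0 : 0 ≤ ∑ i, e i ^ 2 := Finset.sum_nonneg fun i _ => sq_nonneg _
    nlinarith [hdot]
  have hezero : e = 0 := by
    funext i
    have h1 : e i ^ 2 = 0 :=
      (Finset.sum_eq_zero_iff_of_nonneg (fun i _ => sq_nonneg (e i))).mp hsum i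
        (Finset.mem_univ i)
    exact pow_eq_zero_iff (by norm_num) |>.mp h1
  have hdd : d = d' := sub_eq_zero.mp (he ▸ hezero)
  funext i
  have hln : lam i ≠ 0 := (hlam i).ne'
  simp only [Pi.add_apply, Pi.mul_apply, Pi.one_apply, hdd, hd', Pi.inv_apply]
  field_simp
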